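/- If r' ∈ ℝ^K preserves the order of r ∈ ℝ^K (i.e., for all i, j, r(i) > r(j) iff r'(i) > r'(j)), then for any probability distribution π on [K], the covariance r'^T (diag(π) - π π^T) r is nonnegative. -/

import Mathlib

open Matrix

theorem nonneg_covariance_of_order_preserving {K : ℕ} (r r' π : Fin K → ℝ)
    (horder : ∀ i j, r i > r j ↔ r' i > r' j)
    (hπ0 : ∀ i, 0 ≤ π i) (hπ1 : ∑ i, π i = 1) :
    0 ≤ r' ⬝ᵥ ((Matrix.diagonal π - Matrix.vecMulVec π π) *ᵥ r) := by
  have hmono : ∀ i j, 0 ≤ (r' i - r' j) * (r i - r j) := by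
    intro i j
    rcases lt_trichotomy (r i) (r j) with h | h | h
    · have h' := (horder j i).mp h
      nlinarith
    · have h1 : ¬ r' i > r' j := fun hc => lt_irrefl _ (h ▸ (horder i j).mpr hc)
      have h2 : ¬ r' j > r' i := fun hc => lt_irrefl _ (h ▸ (horder j i).mpr hc)
      have h3 : r' i = r' j := le_antisymm (not_lt.mp h1) (not_lt.mp h2)
      simp [h3, h]
    · have h' := (horder i j).mp h
      nlinarith
  set S1 := ∑ i, π i * (r' i * r i) with hS1
  set A := ∑ i, π i * r' i with hA
  set B := ∑ i, π i * r i with hB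
  have hsum : ∀ f : Fin K → ℝ, ∑ i, ∑ j, π i * π j * f i = ∑ i, π i * f i := by
    intro f
    calc ∑ i, ∑ j, π i * π j * f i = ∑ i, (π i * f i) * ∑ j, π j := by
          apply Finset.sum_congr rfl; intro i _
          rw [Finset.mul_sum]; apply Finset.sum_congr rfl; intros; ring
      _ = ∑ i, π i * f i := by rw [hπ1]; simp
  have hprod : ∀ f g : Fin K → ℝ, ∑ i, ∑ j, (f i) * (g j) = (∑ i, f i) * (∑ j, g j) := by
    intro f g; rw [Finset.sum_mul_sum]
  have hL : r' ⬝ᵥ ((Matrix.diagonal π - Matrix.vecMulVec π π) *ᵥ r) = S1 - A * B := by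
    have hv : ∀ i, ((Matrix.diagonal π - Matrix.vecMulVec π π) *ᵥ r) i
        = π i * r i - π i * B := by
      intro i
      simp only [mulVec, dotProduct, Matrix.sub_apply, Matrix.diagonal_apply,
        vecMulVec_apply, sub_mul, Finset.sum_sub_distrib]
      congr 1
      · simp
      · rw [Finset.mul_sum]; apply Finset.sum_congr rfl; intros; ring
    simp only [dotProduct, hv, mul_sub, Finset.sum_sub_distrib]
    congr 1
    · apply Finset.sum_congr rfl; intros; ring
    · have h : ∀ x, r' x * (π x * B) = (π x * r' x) * B := fun x => by ring
      simp only [h, ← Finset.sum_mul]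
      rfl
  have key : ∑ i, ∑ j, π i * π j * ((r' i - r' j) * (r i - r j)) = 2 * (S1 - A * B) := by
    have expand : ∀ i : Fin K, ∀ j : Fin K, π i * π j * ((r' i - r' j) * (r i - r j))
        = π i * π j * (r' i * r i) + π j * π i * (r' j * r j)
          - (π i * r' i) * (π j * r j) - (π i * r i) * (π j * r' j) := by
      intro i j; ring
    calc ∑ i, ∑ j, π i * π j * ((r' i - r' j) * (r i - r j))
        = ∑ i, ∑ j, (π i * π j * (r' i * r i) + π j * π i * (r' j * r j)
          - (π i * r' i) * (π j * r j) - (π i * r i) * (π j * r' j)) := by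
          apply Finset.sum_congr rfl; intro i _
          apply Finset.sum_congr rfl; intro j _
          exact expand i j
      _ = (∑ i, ∑ j, π i * π j * (r' i * r i)) + (∑ i, ∑ j, π j * π i * (r' j * r j))
          - (∑ i, ∑ j, (π i * r' i) * (π j * r j))
          - (∑ i, ∑ j, (π i * r i) * (π j * r' j)) := by
          simp [Finset.sum_add_distrib, Finset.sum_sub_distrib]
      _ = S1 + S1 - A * B - B * A := by
          rw [hsum (fun i => r' i * r i), Finset.sum_comm,
            hsum (fun j => r' j * r j), hprod, hprod]
      _ = 2 * (S1 - A * B) := by ring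
  have hnn : 0 ≤ ∑ i, ∑ j, π i * π j * ((r' i - r' j) * (r i - r j)) := by
    apply Finset.sum_nonneg; intro i _
    apply Finset.sum_nonneg; intro j _
    exact mul_nonneg (mul_nonneg (hπ0 i) (hπ0 j)) (hmono i j)
  rw [hL]; linarith [key ▸ hnn]
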